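/- arXiv:2605.10205 — 4 statements merged into one kernel-verified Lean document; each statement's English description precedes it below -/
import Mathlib

section
/- Let H be a real inner product space and g : H → ℝ a differentiable function that is μ-strongly convex (μ > 0) and β-smooth (β > 0). Then for every real η with 0 ≤ η ≤ 1/β and all w, w' ∈ H, ‖(w − η∇g(w)) − (w' − η∇g(w'))‖ ≤ (1 − ημ/2)‖w − w'‖. -/
open scoped RealInnerProductSpace

lemma descent_lemma {H : Type*} [NormedAddCommGroup H] [InnerProductSpace ℝ H]
    (g : H → ℝ) (g' : H → H) (β : ℝ) (hβ : 0 < β)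
    (hdiff : ∀ x : H, HasFDerivAt g ((innerSL ℝ) (g' x)) x)
    (hsmooth : ∀ x y : H, ‖g' x - g' y‖ ≤ β * ‖x - y‖)
    (x y : H) : g y ≤ g x + ⟪g' x, y - x⟫ + β / 2 * ‖y - x‖ ^ 2 := by
  set v := y - x with hv
  set ψ : ℝ → ℝ := fun t => g (x + t • v) - t * ⟪g' x, v⟫ - β / 2 * t ^ 2 * ‖v‖ ^ 2 with hψ
  have hline : ∀ t : ℝ, HasDerivAt (fun s : ℝ => x + s • v) v t := by
    intro t
    simpa using ((hasDerivAt_id t).smul_const v).const_add x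
  have hφ : ∀ t : ℝ, HasDerivAt (fun s : ℝ => g (x + s • v)) ⟪g' (x + t • v), v⟫ t := by
    intro t
    exact (hdiff (x + t • v)).comp_hasDerivAt t (hline t)
  have hψ' : ∀ t : ℝ, HasDerivAt ψ
      (⟪g' (x + t • v), v⟫ - ⟪g' x, v⟫ - β * t * ‖v‖ ^ 2) t := by
    intro t
    have h1 : HasDerivAt (fun s : ℝ => s * ⟪g' x, v⟫) ⟪g' x, v⟫ t := by
      simpa using (hasDerivAt_id t).mul_const ⟪g' x, v⟫
    have h2 : HasDerivAt (fun s : ℝ => β / 2 * s ^ 2 * ‖v‖ ^ 2) (β * t * ‖v‖ ^ 2) t := by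
      have := ((hasDerivAt_pow 2 t).const_mul (β / 2)).mul_const (‖v‖ ^ 2)
      refine this.congr_deriv ?_
      ring
    exact ((hφ t).sub h1).sub h2
  have hanti : AntitoneOn ψ (Set.Icc 0 1) := by
    apply antitoneOn_of_deriv_nonpos (convex_Icc 0 1)
    · exact fun t _ => ((hψ' t).continuousAt).continuousWithinAt
    · exact fun t _ => ((hψ' t).differentiableAt).differentiableWithinAt
    · intro t ht
      rw [interior_Icc] at ht
      rw [(hψ' t).deriv]
      have hbound : ⟪g' (x + t • v) - g' x, v⟫ ≤ β * t * ‖v‖ ^ 2 := by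
        calc ⟪g' (x + t • v) - g' x, v⟫ ≤ ‖g' (x + t • v) - g' x‖ * ‖v‖ :=
              real_inner_le_norm _ _
          _ ≤ (β * ‖(x + t • v) - x‖) * ‖v‖ := by
              gcongr; exact hsmooth _ _
          _ = β * t * ‖v‖ ^ 2 := by
              simp [norm_smul, abs_of_nonneg ht.1.le]; ring
      have := hbound
      rw [inner_sub_left] at this
      linarith
  have h01 : ψ 1 ≤ ψ 0 := hanti (by norm_num) (by norm_num) (by norm_num)
  simp only [hψ, one_smul, zero_smul, add_zero, one_pow, one_mul] at h01
  have hx : x + v = y := by rw [hv]; abel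
  rw [hx] at h01
  simp at h01
  linarith

lemma cocoercive {H : Type*} [NormedAddCommGroup H] [InnerProductSpace ℝ H]
    (g : H → ℝ) (g' : H → H) (β : ℝ) (hβ : 0 < β)
    (hdiff : ∀ x : H, HasFDerivAt g ((innerSL ℝ) (g' x)) x)
    (hconv : ∀ x y : H, g y + ⟪g' y, x - y⟫ ≤ g x)
    (hsmooth : ∀ x y : H, ‖g' x - g' y‖ ≤ β * ‖x - y‖)
    (x y : H) : (1 / β) * ‖g' x - g' y‖ ^ 2 ≤ ⟪g' x - g' y, x - y⟫ := by
  have key : ∀ a b : H, g a + ⟪g' a, b - a⟫ + 1 / (2 * β) * ‖g' b - g' a‖ ^ 2 ≤ g b := by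
    intro a b
    set Δ := g' b - g' a with hΔ
    set z := b - (1 / β) • Δ with hz
    have h1 : g a + ⟪g' a, z - a⟫ ≤ g z := hconv z a
    have h2 : g z ≤ g b + ⟪g' b, z - b⟫ + β / 2 * ‖z - b‖ ^ 2 :=
      descent_lemma g g' β hβ hdiff hsmooth b z
    have hzb : z - b = -((1 / β) • Δ) := by rw [hz]; abel
    have hza : z - a = (b - a) - (1 / β) • Δ := by rw [hz]; abel
    rw [hzb] at h2
    rw [hza] at h1
    rw [inner_sub_right, inner_smul_right] at h1
    rw [inner_neg_right, inner_smul_right, norm_neg, norm_smul] at h2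
    have hΔsq : ⟪g' b, Δ⟫ - ⟪g' a, Δ⟫ = ‖Δ‖ ^ 2 := by
      rw [← inner_sub_left, ← hΔ, real_inner_self_eq_norm_sq]
    have hnn : ‖(1 : ℝ) / β‖ = 1 / β := by
      rw [Real.norm_eq_abs, abs_of_pos (by positivity)]
    rw [hnn] at h2
    have hβ' : β ≠ 0 := ne_of_gt hβ
    have e1 : β / 2 * (1 / β * ‖Δ‖) ^ 2 = 1 / (2 * β) * ‖Δ‖ ^ 2 := by
      field_simp
    have e2 : 1 / β * ⟪g' b, Δ⟫ - 1 / β * ⟪g' a, Δ⟫ = 1 / β * ‖Δ‖ ^ 2 := by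
      rw [← mul_sub, hΔsq]
    have e3 : 1 / β * ‖Δ‖ ^ 2 = 1 / (2 * β) * ‖Δ‖ ^ 2 + 1 / (2 * β) * ‖Δ‖ ^ 2 := by
      field_simp; ring
    linarith
  have k1 := key x y
  have k2 := key y x
  have h1 : ‖g' x - g' y‖ = ‖g' y - g' x‖ := by rw [← norm_neg]; congr 1; abel
  have h2 : ⟪g' x, y - x⟫ + ⟪g' y, x - y⟫ = -⟪g' x - g' y, x - y⟫ := by
    rw [inner_sub_left]
    have : ⟪g' x, y - x⟫ = -⟪g' x, x - y⟫ := by rw [← inner_neg_right]; congr 1; abel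
    rw [this]; ring
  have hβ' : β ≠ 0 := ne_of_gt hβ
  rw [h1] at k2 ⊢
  have e3 : 1 / β * ‖g' y - g' x‖ ^ 2
      = 1 / (2 * β) * ‖g' y - g' x‖ ^ 2 + 1 / (2 * β) * ‖g' y - g' x‖ ^ 2 := by
    field_simp; ring
  linarith

/-- For a `μ`-strongly convex and `β`-smooth differentiable function `g`
on a real inner product space, the gradient-descent update is a `(1 - ημ/2)`-contraction
whenever `0 ≤ η ≤ 1/β`. -/
theorem gradient_descent_contraction_strongly_convex
    {H : Type*} [NormedAddCommGroup H] [InnerProductSpace ℝ H]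
    (g : H → ℝ) (g' : H → H) (μ β : ℝ) (hμ : 0 < μ) (hβ : 0 < β)
    (hdiff : ∀ x : H, HasFDerivAt g ((innerSL ℝ) (g' x)) x)
    (hsconv : ∀ x y : H, g y + ⟪g' y, x - y⟫ + μ / 2 * ‖x - y‖ ^ 2 ≤ g x)
    (hsmooth : ∀ x y : H, ‖g' x - g' y‖ ≤ β * ‖x - y‖)
    (η : ℝ) (hη0 : 0 ≤ η) (hη1 : η ≤ 1 / β) (w w' : H) :
    ‖(w - η • g' w) - (w' - η • g' w')‖ ≤ (1 - η * μ / 2) * ‖w - w'‖ := by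
  have hconv : ∀ x y : H, g y + ⟪g' y, x - y⟫ ≤ g x := by
    intro x y
    have := hsconv x y
    nlinarith [sq_nonneg ‖x - y‖]
  set d := w - w' with hd
  set Δ := g' w - g' w' with hΔ
  -- strong monotonicity
  have hmono : μ * ‖d‖ ^ 2 ≤ ⟪Δ, d⟫ := by
    have h1 := hsconv w w'
    have h2 := hsconv w' w
    have e1 : ⟪g' w', w - w'⟫ + ⟪g' w, w' - w⟫ = -⟪Δ, d⟫ := by
      have : ⟪g' w, w' - w⟫ = -⟪g' w, w - w'⟫ := by
        rw [← inner_neg_right]; congr 1; abel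
      rw [this, hΔ, hd, inner_sub_left]; ring
    have e2 : ‖w' - w‖ = ‖w - w'‖ := by rw [← norm_neg]; congr 1; abel
    rw [e2] at h2
    have : μ * ‖w - w'‖ ^ 2 ≤ ⟪Δ, d⟫ := by linarith
    simpa [hd] using this
  -- co-coercivity
  have hcoco : (1 / β) * ‖Δ‖ ^ 2 ≤ ⟪Δ, d⟫ :=
    cocoercive g g' β hβ hdiff hconv hsmooth w w'
  have hrearr : (w - η • g' w) - (w' - η • g' w') = d - η • Δ := by
    rw [hd, hΔ, smul_sub]; abel
  rw [hrearr]
  -- bound on the square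
  have hsq : ‖d - η • Δ‖ ^ 2 ≤ (1 - η * μ) * ‖d‖ ^ 2 := by
    have hexp : ‖d - η • Δ‖ ^ 2 = ‖d‖ ^ 2 - 2 * (η * ⟪Δ, d⟫) + η ^ 2 * ‖Δ‖ ^ 2 := by
      rw [norm_sub_sq_real, inner_smul_right, norm_smul, real_inner_comm]
      rw [Real.norm_eq_abs, abs_of_nonneg hη0]
      ring
    have hη2 : η ^ 2 * ‖Δ‖ ^ 2 ≤ η * ((1 / β) * ‖Δ‖ ^ 2) := by
      have : η ^ 2 ≤ η * (1 / β) := by nlinarith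
      nlinarith [sq_nonneg ‖Δ‖]
    have h3 : η * ((1 / β) * ‖Δ‖ ^ 2) ≤ η * ⟪Δ, d⟫ := by
      apply mul_le_mul_of_nonneg_left hcoco hη0
    have h4 : η * (μ * ‖d‖ ^ 2) ≤ η * ⟪Δ, d⟫ :=
      mul_le_mul_of_nonneg_left hmono hη0
    nlinarith
  rcases eq_or_ne w w' with h | h
  · have hΔ0 : Δ = 0 := by rw [hΔ, h, sub_self]
    have hd0 : d = 0 := by rw [hd, h, sub_self]
    rw [hd0, hΔ0]
    simp
  · have hdpos : 0 < ‖d‖ := by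
      rw [hd, norm_pos_iff, sub_ne_zero]; exact h
    have hμβ : μ ≤ β := by
      have h5 : ⟪Δ, d⟫ ≤ ‖Δ‖ * ‖d‖ := real_inner_le_norm _ _
      have h6 : ‖Δ‖ * ‖d‖ ≤ β * ‖d‖ * ‖d‖ :=
        mul_le_mul_of_nonneg_right (hsmooth w w') (norm_nonneg d)
      nlinarith [mul_pos hdpos hdpos]
    have hημ : η * μ ≤ 1 := by
      calc η * μ ≤ η * β := by nlinarith
        _ ≤ (1 / β) * β := by nlinarith
        _ = 1 := by field_simp
    have hfac : 0 ≤ 1 - η * μ / 2 := by linarith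
    have hsq2 : ‖d - η • Δ‖ ^ 2 ≤ ((1 - η * μ / 2) * ‖d‖) ^ 2 := by
      nlinarith [sq_nonneg (η * μ * ‖d‖), sq_nonneg ‖d‖]
    calc ‖d - η • Δ‖ = Real.sqrt (‖d - η • Δ‖ ^ 2) := (Real.sqrt_sq (norm_nonneg _)).symm
      _ ≤ Real.sqrt (((1 - η * μ / 2) * ‖d‖) ^ 2) := Real.sqrt_le_sqrt hsq2
      _ = (1 - η * μ / 2) * ‖d‖ := Real.sqrt_sq (mul_nonneg hfac (norm_nonneg _))
end

section
/- For every real λ with 0 < λ < 1 and every positive integer t, ∑_{q=1}^{t−1} λ^{t−1−q}/(q+1) ≤ C_λ/t, where C_λ = (1/(λ log(1/λ))) · (8/(e² log(1/λ)) + 2). (For t = 1 the left-hand side is the empty sum 0.) -/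
/-- The constant `C_λ = (1/(λ log(1/λ))) · (8/(e² log(1/λ)) + 2)` for `0 < λ < 1`. -/
noncomputable def Clam (lam : ℝ) : ℝ :=
  (1 / (lam * Real.log (1 / lam))) * (8 / (Real.exp 1 ^ 2 * Real.log (1 / lam)) + 2)

set_option maxHeartbeats 1000000 in
/-- For `0 < λ < 1` and a positive integer `t`,
`∑_{q=1}^{t-1} λ^{t-1-q}/(q+1) ≤ C_λ / t`. -/
theorem sum_pow_div_le_Clam_div (lam : ℝ) (hlam0 : 0 < lam) (hlam1 : lam < 1)
    (t : ℕ) (ht : 1 ≤ t) :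
    ∑ q ∈ Finset.Icc 1 (t - 1), lam ^ (t - 1 - q) / ((q : ℝ) + 1) ≤ Clam lam / (t : ℝ) := by
  set L := Real.log (1 / lam) with hLdef
  have hL : 0 < L := Real.log_pos (by rw [lt_div_iff₀ hlam0]; simpa using hlam1)
  have h1l : 0 < 1 - lam := by linarith
  have hkey : lam * L ≤ 1 - lam := by
    have h := Real.log_le_sub_one_of_pos (show (0:ℝ) < 1/lam by positivity)
    have h2 : lam * L ≤ lam * (1/lam - 1) := mul_le_mul_of_nonneg_left h hlam0.le
    calc lam * L ≤ lam * (1/lam - 1) := h2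
      _ = 1 - lam := by field_simp
  have ht' : (0:ℝ) < (t:ℝ) := by exact_mod_cast ht
  rw [le_div_iff₀ ht']
  have hnorm : ‖lam‖ < 1 := by rw [Real.norm_eq_abs, abs_of_pos hlam0]; exact hlam1
  -- step 1: per-term bound after multiplying by t
  have step1 : (∑ q ∈ Finset.Icc 1 (t - 1), lam ^ (t - 1 - q) / ((q : ℝ) + 1)) * t
      ≤ ∑ q ∈ Finset.Icc 1 (t - 1),
          ((1/2) * ((t - 1 - q : ℕ) : ℝ) * lam ^ (t - 1 - q) + lam ^ (t - 1 - q)) := by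
    rw [Finset.sum_mul]
    apply Finset.sum_le_sum
    intro q hq
    simp only [Finset.mem_Icc] at hq
    obtain ⟨hq1, hq2⟩ := hq
    have hqpos : (1:ℝ) ≤ (q:ℝ) := by exact_mod_cast hq1
    have hpow : 0 ≤ lam ^ (t - 1 - q) := pow_nonneg hlam0.le _
    have hcast : (t:ℝ) = ((t - 1 - q : ℕ) : ℝ) + ((q:ℝ) + 1) := by
      have hnat : (t - 1 - q) + (q + 1) = t := by omega
      have := congrArg (fun m : ℕ => (m : ℝ)) hnat
      push_cast at this
      linarith
    rw [hcast]
    have hq1' : (0:ℝ) < (q:ℝ) + 1 := by linarith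
    rw [div_mul_eq_mul_div, mul_add, add_div]
    have e1 : lam ^ (t - 1 - q) * ((q:ℝ) + 1) / ((q:ℝ) + 1) = lam ^ (t - 1 - q) := by
      field_simp
    rw [e1]
    have hn0 : 0 ≤ ((t - 1 - q : ℕ) : ℝ) * lam ^ (t - 1 - q) :=
      mul_nonneg (Nat.cast_nonneg _) hpow
    have hbd : lam ^ (t - 1 - q) * ((t - 1 - q : ℕ) : ℝ) / ((q:ℝ) + 1)
        ≤ (1/2) * ((t - 1 - q : ℕ) : ℝ) * lam ^ (t - 1 - q) := by
      rw [div_le_iff₀ hq1']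
      nlinarith
    linarith
  -- step 2: reindex
  have step2 : ∑ q ∈ Finset.Icc 1 (t - 1),
        ((1/2) * ((t - 1 - q : ℕ) : ℝ) * lam ^ (t - 1 - q) + lam ^ (t - 1 - q))
      = ∑ n ∈ Finset.range (t - 1), ((1/2) * (n : ℝ) * lam ^ n + lam ^ n) := by
    have hIcc : Finset.Icc 1 (t - 1) = Finset.Ico 1 t := by
      ext x; simp [Finset.mem_Icc, Finset.mem_Ico]; omega
    rw [hIcc, Finset.sum_Ico_eq_sum_range]
    rw [← Finset.sum_range_reflect (fun n => (1/2) * (n : ℝ) * lam ^ n + lam ^ n) (t - 1)]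
    apply Finset.sum_congr rfl
    intro i hi
    simp only [Finset.mem_range] at hi
    have : t - 1 - (1 + i) = t - 1 - 1 - i := by omega
    rw [this]
  -- step 3: bound by infinite series
  have hsummable : Summable (fun n : ℕ => (n:ℝ) * lam ^ n) := by
    have := summable_pow_mul_geometric_of_norm_lt_one (R := ℝ) 1 hnorm
    simpa using this
  have hsum1 : ∑ n ∈ Finset.range (t - 1), (n:ℝ) * lam ^ n ≤ lam / (1 - lam) ^ 2 := by
    have h := Summable.sum_le_tsum (Finset.range (t - 1))
      (fun i _ => mul_nonneg (Nat.cast_nonneg i) (pow_nonneg hlam0.le i)) hsummable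
    rwa [tsum_coe_mul_geometric_of_norm_lt_one hnorm] at h
  have hsum2 : ∑ n ∈ Finset.range (t - 1), lam ^ n ≤ 1 / (1 - lam) := by
    have h := Summable.sum_le_tsum (Finset.range (t - 1))
      (fun i _ => pow_nonneg hlam0.le i) (summable_geometric_of_lt_one hlam0.le hlam1)
    rw [tsum_geometric_of_lt_one hlam0.le hlam1] at h
    simpa [one_div] using h
  have step3 : ∑ n ∈ Finset.range (t - 1), ((1/2) * (n : ℝ) * lam ^ n + lam ^ n)
      ≤ (1/2) * (lam / (1 - lam) ^ 2) + 1 / (1 - lam) := by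
    rw [Finset.sum_add_distrib]
    have : ∑ n ∈ Finset.range (t - 1), (1/2) * (n : ℝ) * lam ^ n
        = (1/2) * ∑ n ∈ Finset.range (t - 1), (n : ℝ) * lam ^ n := by
      rw [Finset.mul_sum]; apply Finset.sum_congr rfl; intros; ring
    rw [this]
    have := mul_le_mul_of_nonneg_left hsum1 (by norm_num : (0:ℝ) ≤ 1/2)
    linarith
  -- step 4: arithmetic
  have hBL : 0 < lam * L := mul_pos hlam0 hL
  have hA : 0 < lam * L ^ 2 := by positivity
  have he : Real.exp 1 ^ 2 ≤ 16 := by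
    have := Real.exp_one_lt_d9
    nlinarith [Real.exp_pos 1]
  have hE : 0 < Real.exp 1 ^ 2 := by positivity
  have ha : lam / (1 - lam) ^ 2 ≤ 1 / (lam * L ^ 2) := by
    rw [div_le_div_iff₀ (by positivity) hA]
    have h2 : (lam * L) ^ 2 ≤ (1 - lam) ^ 2 := by nlinarith
    nlinarith
  have hb : 1 / (1 - lam) ≤ 1 / (lam * L) :=
    one_div_le_one_div_of_le hBL hkey
  have hC : Clam lam = 8 / (Real.exp 1 ^ 2 * (lam * L ^ 2)) + 2 / (lam * L) := by
    rw [Clam, ← hLdef]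
    field_simp
  have hc : (1/2) * (1 / (lam * L ^ 2)) ≤ 8 / (Real.exp 1 ^ 2 * (lam * L ^ 2)) := by
    have h : (1:ℝ)/2 * (1 / (lam * L ^ 2)) = 1 / (2 * (lam * L ^ 2)) := by ring
    rw [h, div_le_div_iff₀ (by positivity) (by positivity)]
    have h16 := mul_le_mul_of_nonneg_right he hA.le
    linarith
  calc (∑ q ∈ Finset.Icc 1 (t - 1), lam ^ (t - 1 - q) / ((q : ℝ) + 1)) * t
      ≤ (1/2) * (lam / (1 - lam) ^ 2) + 1 / (1 - lam) := by
        rw [step2] at step1; linarith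
    _ ≤ (1/2) * (1 / (lam * L ^ 2)) + 1 / (lam * L) := by
        have := mul_le_mul_of_nonneg_left ha (by norm_num : (0:ℝ) ≤ 1/2)
        linarith
    _ ≤ 8 / (Real.exp 1 ^ 2 * (lam * L ^ 2)) + 2 / (lam * L) := by
        have : 1 / (lam * L) ≤ 2 / (lam * L) := by
          gcongr
          norm_num
        linarith
    _ = Clam lam := hC.symm
end

section
/- Assume f is L-Lipschitz, P is a gossip matrix with spectral bound λ ∈ [0, 1), and (w^t(i)) are D-SGD iterates on a dataset S ∈ 𝒵^{m×n} with common initialization w^1(i) = w^1 for all i, i.e. w^{t+1}(i) = ∑_{l=1}^m P_{il} w^t(l) − η_t ∇f(w^t(i); Z_{j_t(i)(i)}). Then for every t ∈ {1,…,T}, letting w̄^{t+1} = (1/m)∑_{i=1}^m w^{t+1}(i), one has (∑_{i=1}^m ‖w̄^{t+1} − w^{t+1}(i)‖²)^{1/2} ≤ 2√m · L · ∑_{q=1}^{t} η_q λ^{t−q}. -/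
lemma l2_triangle' {H : Type*} [NormedAddCommGroup H] {m : ℕ} (a b : Fin m → H) :
    Real.sqrt (∑ i, ‖a i + b i‖ ^ 2)
      ≤ Real.sqrt (∑ i, ‖a i‖ ^ 2) + Real.sqrt (∑ i, ‖b i‖ ^ 2) := by
  have key : ∀ u : Fin m → H,
      Real.sqrt (∑ i, ‖u i‖ ^ 2) = ‖(WithLp.equiv 2 (Fin m → H)).symm u‖ :=
    fun u => (PiLp.norm_eq_of_L2 _).symm
  rw [key, key, key]
  exact norm_add_le ((WithLp.equiv 2 (Fin m → H)).symm a) ((WithLp.equiv 2 (Fin m → H)).symm b)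

lemma l2_bound' {H : Type*} [NormedAddCommGroup H] {m : ℕ} (u : Fin m → H) (c : ℝ)
    (hc : 0 ≤ c) (h : ∀ i, ‖u i‖ ≤ c) :
    Real.sqrt (∑ i, ‖u i‖ ^ 2) ≤ Real.sqrt m * c := by
  have hs : (∑ i, ‖u i‖ ^ 2) ≤ (m : ℝ) * c ^ 2 := by
    calc ∑ i, ‖u i‖ ^ 2 ≤ ∑ _i : Fin m, c ^ 2 :=
          Finset.sum_le_sum fun i _ => pow_le_pow_left₀ (norm_nonneg _) (h i) 2
      _ = (m : ℝ) * c ^ 2 := by simp [Finset.sum_const, mul_comm]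
  calc Real.sqrt (∑ i, ‖u i‖ ^ 2) ≤ Real.sqrt ((m : ℝ) * c ^ 2) := Real.sqrt_le_sqrt hs
    _ = Real.sqrt m * c := by
        rw [Real.sqrt_mul (by positivity), Real.sqrt_sq hc]


/-- Consensus bound for D-SGD: if `f` is `L`-Lipschitz and `P` is a gossip
matrix with spectral bound `λ ∈ [0,1)`, then for all `t ∈ {1,…,T}`,
`(∑_i ‖w̄^{t+1} - w^{t+1}(i)‖²)^{1/2} ≤ 2√m L ∑_{q=1}^t η_q λ^{t-q}`. -/
theorem dsgd_consensus_bound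
    {H : Type*} [NormedAddCommGroup H] [InnerProductSpace ℝ H]
    {Z : Type*} (f : Z → H → ℝ) (f' : Z → H → H)
    (L : ℝ) (hL : 0 < L)
    (hdiff : ∀ (z : Z) (x : H), HasFDerivAt (f z) ((innerSL ℝ) (f' z x)) x)
    (hlip : ∀ (z : Z) (x y : H), |f z x - f z y| ≤ L * ‖x - y‖)
    (hgradbd : ∀ (z : Z) (x : H), ‖f' z x‖ ≤ L)
    (m n T : ℕ) (hm : 1 ≤ m) (hn : 1 ≤ n) (hT : 1 ≤ T)
    (P : Fin m → Fin m → ℝ)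
    (hPsym : ∀ i l, P i l = P l i)
    (hPpos : ∀ i l, 0 ≤ P i l)
    (hProw : ∀ i, ∑ l, P i l = 1)
    (lam : ℝ) (hlam0 : 0 ≤ lam) (hlam1 : lam < 1)
    (hspec : ∀ vv : Fin m → H, ∑ i, vv i = 0 →
      Real.sqrt (∑ i, ‖∑ l, P i l • vv l‖ ^ 2) ≤ lam * Real.sqrt (∑ i, ‖vv i‖ ^ 2))
    (S : Fin m → Fin n → Z)
    (η : ℕ → ℝ) (hηpos : ∀ t, 1 ≤ t → t ≤ T → 0 < η t)
    (j : ℕ → Fin m → Fin n)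
    (w₀ : H) (w : ℕ → Fin m → H)
    (hw1 : ∀ i, w 1 i = w₀)
    (hwrec : ∀ t, 1 ≤ t → t ≤ T → ∀ i,
      w (t + 1) i = ∑ l, P i l • w t l - η t • f' (S i (j t i)) (w t i)) :
    ∀ t, 1 ≤ t → t ≤ T →
      Real.sqrt (∑ i, ‖(m : ℝ)⁻¹ • (∑ i', w (t + 1) i') - w (t + 1) i‖ ^ 2)
        ≤ 2 * Real.sqrt m * L * ∑ q ∈ Finset.Icc 1 t, η q * lam ^ (t - q) := by
  have hmR : (0 : ℝ) < m := by exact_mod_cast hm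
  have hm0 : (m : ℝ) ≠ 0 := ne_of_gt hmR
  have hPcol : ∀ l, ∑ i, P i l = 1 := fun l => by
    rw [Finset.sum_congr rfl fun i _ => hPsym i l]; exact hProw l
  -- one-step recurrence
  have hrec : ∀ t, 1 ≤ t → t ≤ T →
      Real.sqrt (∑ i, ‖(m : ℝ)⁻¹ • (∑ i', w (t + 1) i') - w (t + 1) i‖ ^ 2)
        ≤ lam * Real.sqrt (∑ i, ‖(m : ℝ)⁻¹ • (∑ i', w t i') - w t i‖ ^ 2)
          + Real.sqrt m * (2 * L * η t) := by
    intro t ht1 htT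
    have hηt : 0 < η t := hηpos t ht1 htT
    set g : Fin m → H := fun i => f' (S i (j t i)) (w t i) with hg
    set wb : H := (m : ℝ)⁻¹ • (∑ i', w t i') with hwb
    set gb : H := (m : ℝ)⁻¹ • (∑ r, g r) with hgb
    set v : Fin m → H := fun l => wb - w t l with hv
    have hvsum : ∑ i, v i = 0 := by
      have h1 : ∑ i, v i = (m : ℝ) • wb - ∑ i, w t i := by
        simp only [hv]
        rw [Finset.sum_sub_distrib, Finset.sum_const]
        congr 1
        rw [← Nat.cast_smul_eq_nsmul ℝ]
        simp [Finset.card_univ]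
      rw [h1, hwb, smul_smul, mul_inv_cancel₀ hm0, one_smul, sub_self]
    have hsum1 : ∑ r, ∑ l, P r l • w t l = ∑ l, w t l := by
      rw [Finset.sum_comm]
      calc ∑ l, ∑ r, P r l • w t l = ∑ l, (∑ r, P r l) • w t l := by
            simp [Finset.sum_smul]
        _ = ∑ l, w t l := Finset.sum_congr rfl fun l _ => by rw [hPcol l, one_smul]
    have havg : (m : ℝ)⁻¹ • (∑ r, w (t + 1) r) = wb - η t • gb := by
      rw [Finset.sum_congr rfl fun r _ => hwrec t ht1 htT r,
        Finset.sum_sub_distrib, hsum1, ← Finset.smul_sum, smul_sub, smul_comm]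
    have hdecomp : ∀ i, (m : ℝ)⁻¹ • (∑ i', w (t + 1) i') - w (t + 1) i
        = (∑ l, P i l • v l) + η t • (g i - gb) := by
      intro i
      have hPv : ∑ l, P i l • v l = wb - ∑ l, P i l • w t l := by
        simp only [hv, smul_sub]
        rw [Finset.sum_sub_distrib, ← Finset.sum_smul, hProw i, one_smul]
      rw [havg, hwrec t ht1 htT i, hPv, smul_sub]
      abel
    have hgbL : ‖gb‖ ≤ L := by
      have h1 : ∑ r, ‖g r‖ ≤ (m : ℝ) * L := by
        calc ∑ r, ‖g r‖ ≤ ∑ _r : Fin m, L := Finset.sum_le_sum fun r _ => hgradbd _ _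
          _ = (m : ℝ) * L := by simp [Finset.sum_const, mul_comm]
      rw [hgb, norm_smul, Real.norm_eq_abs, abs_of_nonneg (by positivity)]
      calc (m : ℝ)⁻¹ * ‖∑ r, g r‖ ≤ (m : ℝ)⁻¹ * ∑ r, ‖g r‖ := by
            gcongr
            exact norm_sum_le _ _
        _ ≤ (m : ℝ)⁻¹ * ((m : ℝ) * L) := by gcongr
        _ = L := by field_simp
    calc Real.sqrt (∑ i, ‖(m : ℝ)⁻¹ • (∑ i', w (t + 1) i') - w (t + 1) i‖ ^ 2)
        = Real.sqrt (∑ i, ‖(∑ l, P i l • v l) + η t • (g i - gb)‖ ^ 2) := by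
          congr 1
          exact Finset.sum_congr rfl fun i _ => by rw [hdecomp i]
      _ ≤ Real.sqrt (∑ i, ‖∑ l, P i l • v l‖ ^ 2)
            + Real.sqrt (∑ i, ‖η t • (g i - gb)‖ ^ 2) :=
          l2_triangle' _ _
      _ ≤ lam * Real.sqrt (∑ i, ‖v i‖ ^ 2) + Real.sqrt m * (2 * L * η t) := by
          refine add_le_add (hspec v hvsum) (l2_bound' _ _ (by positivity) fun i => ?_)
          rw [norm_smul, Real.norm_eq_abs, abs_of_pos hηt]
          calc η t * ‖g i - gb‖ ≤ η t * (L + L) := by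
                gcongr
                calc ‖g i - gb‖ ≤ ‖g i‖ + ‖gb‖ := norm_sub_le _ _
                  _ ≤ L + L := add_le_add (hgradbd _ _) hgbL
            _ = 2 * L * η t := by ring
      _ = lam * Real.sqrt (∑ i, ‖wb - w t i‖ ^ 2) + Real.sqrt m * (2 * L * η t) := by
          simp only [hv]
  -- main induction
  intro t ht1
  induction t, ht1 using Nat.le_induction with
  | base =>
    intro htT
    have h0 : Real.sqrt (∑ i, ‖(m : ℝ)⁻¹ • (∑ i', w 1 i') - w 1 i‖ ^ 2) = 0 := by
      have hz : ∀ i : Fin m, (m : ℝ)⁻¹ • (∑ i', w 1 i') - w 1 i = 0 := by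
        intro i
        simp only [hw1]
        rw [Finset.sum_const, ← Nat.cast_smul_eq_nsmul ℝ, smul_smul]
        simp [Finset.card_univ, inv_mul_cancel₀ hm0]
      simp [hz]
    calc Real.sqrt (∑ i, ‖(m : ℝ)⁻¹ • (∑ i', w (1 + 1) i') - w (1 + 1) i‖ ^ 2)
        ≤ lam * Real.sqrt (∑ i, ‖(m : ℝ)⁻¹ • (∑ i', w 1 i') - w 1 i‖ ^ 2)
            + Real.sqrt m * (2 * L * η 1) := hrec 1 le_rfl htT
      _ = 2 * Real.sqrt m * L * ∑ q ∈ Finset.Icc 1 1, η q * lam ^ (1 - q) := by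
          rw [h0, Finset.Icc_self, Finset.sum_singleton, Nat.sub_self, pow_zero,
            mul_one, mul_zero, zero_add]
          ring
  | succ t ht1 ih =>
    intro htT1
    have htT : t ≤ T := le_trans (Nat.le_succ t) htT1
    have hsum : ∑ q ∈ Finset.Icc 1 (t + 1), η q * lam ^ (t + 1 - q)
        = lam * ∑ q ∈ Finset.Icc 1 t, η q * lam ^ (t - q) + η (t + 1) := by
      rw [Finset.sum_Icc_succ_top (by omega : 1 ≤ t + 1), Nat.sub_self, pow_zero,
        mul_one, Finset.mul_sum]
      congr 1
      refine Finset.sum_congr rfl fun q hq => ?_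
      have hq' : q ≤ t := (Finset.mem_Icc.mp hq).2
      rw [show t + 1 - q = (t - q) + 1 by omega, pow_succ]
      ring
    calc Real.sqrt (∑ i, ‖(m : ℝ)⁻¹ • (∑ i', w (t + 1 + 1) i') - w (t + 1 + 1) i‖ ^ 2)
        ≤ lam * Real.sqrt (∑ i, ‖(m : ℝ)⁻¹ • (∑ i', w (t + 1) i') - w (t + 1) i‖ ^ 2)
            + Real.sqrt m * (2 * L * η (t + 1)) := hrec (t + 1) (by omega) htT1
      _ ≤ lam * (2 * Real.sqrt m * L * ∑ q ∈ Finset.Icc 1 t, η q * lam ^ (t - q))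
            + Real.sqrt m * (2 * L * η (t + 1)) := by
          exact add_le_add (mul_le_mul_of_nonneg_left (ih htT) hlam0) le_rfl
      _ = 2 * Real.sqrt m * L * ∑ q ∈ Finset.Icc 1 (t + 1), η q * lam ^ (t + 1 - q) := by
          rw [hsum]
          ring
end

section
/- Assume f is convex, L-Lipschitz and β-smooth, P is a gossip matrix with spectral bound λ satisfying 0 < λ < 1, the stepsizes are η_t = 1/(t+1), and 1/(t+1) ≤ 2/β for every t ∈ {1,…,T} (equivalently β ≤ 4). Then for every z ∈ 𝒵, |f(w̄^{T+1}; z) − f(v̄^{T+1}; z)| ≤ 4βL²C_λ · T/(T+1) + (2L²/m) ∑_{t=1}^T 𝟙[j_t(r)=k]/(t+1). -/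
open scoped RealInnerProductSpace


section Aux
variable {H : Type*} [NormedAddCommGroup H] [InnerProductSpace ℝ H]

/-- derivative of `t ↦ f (x + t • d)` -/
lemma hasDerivAt_line (f : H → ℝ) (f' : H → H)
    (hdiff : ∀ x, HasFDerivAt f ((innerSL ℝ) (f' x)) x) (x d : H) (t : ℝ) :
    HasDerivAt (fun s : ℝ => f (x + s • d)) ⟪f' (x + t • d), d⟫ t := by
  have hline : HasDerivAt (fun s : ℝ => x + s • d) d t := by
    simpa using ((hasDerivAt_id t).smul_const d).const_add x
  have := (hdiff (x + t • d)).comp_hasDerivAt t hline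
  exact this

/-- gradient inequality for convex functions -/
lemma grad_ineq (f : H → ℝ) (f' : H → H)
    (hdiff : ∀ x, HasFDerivAt f ((innerSL ℝ) (f' x)) x)
    (hconv : ConvexOn ℝ Set.univ f) (x y : H) :
    f x + ⟪f' x, y - x⟫ ≤ f y := by
  set g : ℝ → ℝ := fun s => f (x + s • (y - x)) with hg
  have hder : HasDerivAt g ⟪f' x, y - x⟫ 0 := by
    simpa using hasDerivAt_line f f' hdiff x (y - x) 0
  have htend := hasDerivAt_iff_tendsto_slope.1 hder
  have htend' : Filter.Tendsto (slope g 0) (nhdsWithin 0 (Set.Ioi 0)) (nhds ⟪f' x, y - x⟫) :=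
    htend.mono_left (nhdsWithin_mono _ (fun s hs => ne_of_gt hs))
  have hbound : ∀ᶠ s in nhdsWithin 0 (Set.Ioi 0), slope g 0 s ≤ f y - f x := by
    filter_upwards [Ioo_mem_nhdsGT_of_mem (by norm_num : (0:ℝ) ∈ Set.Ico 0 1)] with s hs
    obtain ⟨hs0, hs1⟩ := hs
    have hcs : g s ≤ (1 - s) * f x + s * f y := by
      have := hconv.2 (Set.mem_univ x) (Set.mem_univ y) (by linarith : (0:ℝ) ≤ 1 - s)
        hs0.le (by ring)
      have hxy : (1 - s) • x + s • y = x + s • (y - x) := by module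
      rw [hxy] at this
      simpa [hg] using this
    have hg0 : g 0 = f x := by simp [hg]
    rw [slope_def_field, hg0, sub_zero, div_le_iff₀ hs0]
    nlinarith
  have := le_of_tendsto htend' hbound
  linarith

/-- descent lemma -/
lemma descent (f : H → ℝ) (f' : H → H) (β : ℝ) (hβ : 0 ≤ β)
    (hdiff : ∀ x, HasFDerivAt f ((innerSL ℝ) (f' x)) x)
    (hsmooth : ∀ x y, ‖f' x - f' y‖ ≤ β * ‖x - y‖) (x y : H) :
    f y ≤ f x + ⟪f' x, y - x⟫ + β / 2 * ‖y - x‖ ^ 2 := by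
  set d : H := y - x with hd
  set h : ℝ → ℝ := fun t => f (x + t • d) - t * ⟪f' x, d⟫ - β / 2 * t ^ 2 * ‖d‖ ^ 2 with hh
  have hder : ∀ t : ℝ, HasDerivAt h
      (⟪f' (x + t • d), d⟫ - ⟪f' x, d⟫ - β / 2 * (2 * t) * ‖d‖ ^ 2) t := by
    intro t
    have h1 := hasDerivAt_line f f' hdiff x d t
    have h2 : HasDerivAt (fun t : ℝ => t * ⟪f' x, d⟫) ⟪f' x, d⟫ t := by
      simpa using (hasDerivAt_id t).mul_const ⟪f' x, d⟫
    have h3 : HasDerivAt (fun t : ℝ => β / 2 * t ^ 2 * ‖d‖ ^ 2) (β / 2 * (2 * t) * ‖d‖ ^ 2) t := by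
      have := ((hasDerivAt_pow 2 t).const_mul (β / 2)).mul_const (‖d‖ ^ 2)
      simpa [mul_comm, mul_assoc, mul_left_comm] using this
    exact (h1.sub h2).sub h3
  have hmono : AntitoneOn h (Set.Icc 0 1) := by
    apply antitoneOn_of_deriv_nonpos (convex_Icc 0 1)
    · exact fun t _ => (hder t).continuousAt.continuousWithinAt
    · exact fun t _ => (hder t).differentiableAt.differentiableWithinAt
    · intro t ht
      rw [interior_Icc] at ht
      rw [(hder t).deriv]
      have hip : ⟪f' (x + t • d) - f' x, d⟫ ≤ β * t * ‖d‖ ^ 2 := by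
        calc ⟪f' (x + t • d) - f' x, d⟫ ≤ ‖f' (x + t • d) - f' x‖ * ‖d‖ :=
              real_inner_le_norm _ _
          _ ≤ (β * ‖(x + t • d) - x‖) * ‖d‖ := by
              apply mul_le_mul_of_nonneg_right (hsmooth _ _) (norm_nonneg _)
          _ = β * t * ‖d‖ ^ 2 := by
              have : ‖(x + t • d) - x‖ = t * ‖d‖ := by
                simp [norm_smul, abs_of_pos ht.1]
              rw [this]; ring
      have := inner_sub_left (𝕜 := ℝ) (f' (x + t • d)) (f' x) d
      rw [this] at hip
      linarith
  have h01 := hmono (Set.mem_Icc.2 ⟨le_refl 0, zero_le_one⟩)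
    (Set.mem_Icc.2 ⟨zero_le_one, le_refl 1⟩) zero_le_one
  have h0 : h 0 = f x := by simp [hh]
  have h1 : h 1 = f y - ⟪f' x, d⟫ - β / 2 * ‖d‖ ^ 2 := by simp [hh, hd]
  rw [h0, h1] at h01
  rw [hd] at *
  linarith

end Aux


section Aux2
variable {H : Type*} [NormedAddCommGroup H] [InnerProductSpace ℝ H]

lemma key_step (f : H → ℝ) (f' : H → H) (β : ℝ) (hβ : 0 < β)
    (hdiff : ∀ x, HasFDerivAt f ((innerSL ℝ) (f' x)) x)
    (hsmooth : ∀ x y, ‖f' x - f' y‖ ≤ β * ‖x - y‖)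
    (hconv : ConvexOn ℝ Set.univ f)
    (hgi : ∀ x y, f x + ⟪f' x, y - x⟫ ≤ f y)
    (hdl : ∀ x y, f y ≤ f x + ⟪f' x, y - x⟫ + β / 2 * ‖y - x‖ ^ 2)
    (x y : H) :
    f x + ⟪f' x, y - x⟫ + (2 * β)⁻¹ * ‖f' y - f' x‖ ^ 2 ≤ f y := by
  set d : H := f' y - f' x with hd
  set z : H := y - β⁻¹ • d with hz
  have h1 := hgi x z
  have h2 := hdl y z
  have e1 : ⟪f' x, z - x⟫ = ⟪f' x, y - x⟫ - β⁻¹ * ⟪f' x, d⟫ := by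
    rw [hz]
    rw [show y - β⁻¹ • d - x = (y - x) - β⁻¹ • d by abel]
    rw [inner_sub_right, real_inner_smul_right]
  have e2 : ⟪f' y, z - y⟫ = -(β⁻¹ * ⟪f' y, d⟫) := by
    rw [hz, show y - β⁻¹ • d - y = -(β⁻¹ • d) by abel, inner_neg_right, real_inner_smul_right]
  have e3 : ‖z - y‖ ^ 2 = β⁻¹ ^ 2 * ‖d‖ ^ 2 := by
    rw [hz, show y - β⁻¹ • d - y = -(β⁻¹ • d) by abel, norm_neg, norm_smul]
    rw [Real.norm_eq_abs, abs_of_pos (by positivity)]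
    ring
  have e4 : ⟪f' y, d⟫ - ⟪f' x, d⟫ = ‖d‖ ^ 2 := by
    rw [← inner_sub_left, ← hd, real_inner_self_eq_norm_sq]
  rw [e1] at h1
  rw [e2, e3] at h2
  have hβ' : β⁻¹ > 0 := by positivity
  have hc : β / 2 * (β⁻¹ ^ 2 * ‖d‖ ^ 2) = (2 * β)⁻¹ * ‖d‖ ^ 2 := by
    field_simp
  have e4' : β⁻¹ * ⟪f' y, d⟫ - β⁻¹ * ⟪f' x, d⟫ = β⁻¹ * ‖d‖ ^ 2 := by
    rw [← mul_sub, e4]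
  have hid : β⁻¹ * ‖d‖ ^ 2 = 2 * ((2 * β)⁻¹ * ‖d‖ ^ 2) := by
    field_simp
  rw [hc] at h2
  linarith

lemma coco (f : H → ℝ) (f' : H → H) (β : ℝ) (hβ : 0 < β)
    (hdiff : ∀ x, HasFDerivAt f ((innerSL ℝ) (f' x)) x)
    (hsmooth : ∀ x y, ‖f' x - f' y‖ ≤ β * ‖x - y‖)
    (hconv : ConvexOn ℝ Set.univ f) (x y : H) :
    ‖f' x - f' y‖ ^ 2 ≤ β * ⟪f' x - f' y, x - y⟫ := by
  have hgi : ∀ x y, f x + ⟪f' x, y - x⟫ ≤ f y := grad_ineq f f' hdiff hconv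
  have hdl : ∀ x y, f y ≤ f x + ⟪f' x, y - x⟫ + β / 2 * ‖y - x‖ ^ 2 :=
    descent f f' β hβ.le hdiff hsmooth
  have h1 := key_step f f' β hβ hdiff hsmooth hconv hgi hdl x y
  have h2 := key_step f f' β hβ hdiff hsmooth hconv hgi hdl y x
  have e1 : ‖f' x - f' y‖ = ‖f' y - f' x‖ := norm_sub_rev _ _
  have e2 : ⟪f' x, y - x⟫ + ⟪f' y, x - y⟫ = -⟪f' x - f' y, x - y⟫ := by
    rw [inner_sub_left]
    rw [show (y - x : H) = -(x - y) by abel, inner_neg_right]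
    ring
  have hβ' : (2 * β)⁻¹ > 0 := by positivity
  rw [e1]
  have e1sq : ‖f' x - f' y‖ ^ 2 = ‖f' y - f' x‖ ^ 2 := by rw [e1]
  rw [e1sq] at h2
  have : 2 * (2 * β)⁻¹ * ‖f' y - f' x‖ ^ 2 ≤ ⟪f' x - f' y, x - y⟫ := by linarith
  have h3 : 2 * (2 * β)⁻¹ = β⁻¹ := by field_simp
  rw [h3] at this
  calc ‖f' y - f' x‖ ^ 2 = β * (β⁻¹ * ‖f' y - f' x‖ ^ 2) := by field_simp
    _ ≤ β * ⟪f' x - f' y, x - y⟫ := by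
        apply mul_le_mul_of_nonneg_left _ hβ.le
        linarith

lemma nonexp_of_coco (u d : H) (β η : ℝ) (hβ : 0 < β)
    (hco : ‖d‖ ^ 2 ≤ β * ⟪d, u⟫) (hη0 : 0 ≤ η) (hη : η ≤ 2 / β) :
    ‖u - η • d‖ ≤ ‖u‖ := by
  have hsq : ‖u - η • d‖ ^ 2 ≤ ‖u‖ ^ 2 := by
    rw [norm_sub_sq_real, norm_smul, real_inner_smul_right, Real.norm_eq_abs,
      abs_of_nonneg hη0, mul_pow]
    have hdu : 0 ≤ ⟪d, u⟫ := by nlinarith [sq_nonneg ‖d‖]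
    have h1 : η ^ 2 * ‖d‖ ^ 2 ≤ η * (2 / β) * ‖d‖ ^ 2 := by
      have h := mul_le_mul_of_nonneg_right (mul_le_mul_of_nonneg_left hη hη0) (sq_nonneg ‖d‖)
      nlinarith [h]
    have h2 : η * (2 / β) * ‖d‖ ^ 2 ≤ η * (2 / β) * (β * ⟪d, u⟫) := by
      apply mul_le_mul_of_nonneg_left hco; positivity
    have h3 : η * (2 / β) * (β * ⟪d, u⟫) = 2 * (η * ⟪d, u⟫) := by field_simp
    have hiu : ⟪u, d⟫ = ⟪d, u⟫ := real_inner_comm _ _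
    rw [hiu]
    nlinarith
  exact (pow_le_pow_iff_left₀ (norm_nonneg _) (norm_nonneg _) two_ne_zero).1 hsq

end Aux2


section Aux3
variable {H : Type*} [NormedAddCommGroup H] [InnerProductSpace ℝ H]

lemma avg_coco {m : ℕ} (hm : 0 < m) (d : Fin m → H) (u : H) (β : ℝ) (hβ : 0 < β)
    (h : ∀ i, ‖d i‖ ^ 2 ≤ β * ⟪d i, u⟫) :
    ‖(m : ℝ)⁻¹ • ∑ i, d i‖ ^ 2 ≤ β * ⟪(m : ℝ)⁻¹ • ∑ i, d i, u⟫ := by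
  have hm' : (0:ℝ) < m := by exact_mod_cast hm
  have h1 : ‖∑ i, d i‖ ^ 2 ≤ (m:ℝ) * ∑ i, ‖d i‖ ^ 2 := by
    calc ‖∑ i, d i‖ ^ 2 ≤ (∑ i, ‖d i‖) ^ 2 := by
          apply pow_le_pow_left₀ (norm_nonneg _) (norm_sum_le _ _)
      _ ≤ (m:ℝ) * ∑ i, ‖d i‖ ^ 2 := by
          simpa using sq_sum_le_card_mul_sum_sq (s := Finset.univ) (f := fun i => ‖d i‖)
  have h2 : ∑ i, ‖d i‖ ^ 2 ≤ β * ∑ i, ⟪d i, u⟫ := by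
    rw [Finset.mul_sum]; exact Finset.sum_le_sum fun i _ => h i
  have h3 : ⟪(m:ℝ)⁻¹ • ∑ i, d i, u⟫ = (m:ℝ)⁻¹ * ∑ i, ⟪d i, u⟫ := by
    rw [real_inner_smul_left, sum_inner]
  have h4 : ‖(m:ℝ)⁻¹ • ∑ i, d i‖ ^ 2 = (m:ℝ)⁻¹ ^ 2 * ‖∑ i, d i‖ ^ 2 := by
    rw [norm_smul, Real.norm_eq_abs, abs_of_pos (by positivity), mul_pow]
  rw [h3, h4]
  calc (m:ℝ)⁻¹ ^ 2 * ‖∑ i, d i‖ ^ 2 ≤ (m:ℝ)⁻¹ ^ 2 * ((m:ℝ) * ∑ i, ‖d i‖ ^ 2) :=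
        mul_le_mul_of_nonneg_left h1 (by positivity)
    _ = (m:ℝ)⁻¹ * ∑ i, ‖d i‖ ^ 2 := by field_simp
    _ ≤ (m:ℝ)⁻¹ * (β * ∑ i, ⟪d i, u⟫) := mul_le_mul_of_nonneg_left h2 (by positivity)
    _ = β * ((m:ℝ)⁻¹ * ∑ i, ⟪d i, u⟫) := by ring

/-- ℓ² norm of a tuple of vectors -/
noncomputable def l2n {H : Type*} [NormedAddCommGroup H] {m : ℕ} (x : Fin m → H) : ℝ :=
  Real.sqrt (∑ i, ‖x i‖ ^ 2)

lemma l2n_eq_norm {m : ℕ} (x : Fin m → H) :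
    l2n x = ‖(WithLp.equiv 2 (∀ _ : Fin m, H)).symm x‖ := by
  rw [PiLp.norm_eq_of_L2]; rfl

lemma l2n_nonneg {m : ℕ} (x : Fin m → H) : 0 ≤ l2n x := Real.sqrt_nonneg _

lemma l2n_add_le {m : ℕ} (x y : Fin m → H) :
    l2n (fun i => x i + y i) ≤ l2n x + l2n y := by
  rw [l2n_eq_norm, l2n_eq_norm, l2n_eq_norm]
  exact norm_add_le ((WithLp.equiv 2 (∀ _ : Fin m, H)).symm x)
    ((WithLp.equiv 2 (∀ _ : Fin m, H)).symm y)

lemma l2n_sub_le {m : ℕ} (x y : Fin m → H) :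
    l2n (fun i => x i - y i) ≤ l2n x + l2n y := by
  rw [l2n_eq_norm, l2n_eq_norm, l2n_eq_norm]
  exact norm_sub_le ((WithLp.equiv 2 (∀ _ : Fin m, H)).symm x)
    ((WithLp.equiv 2 (∀ _ : Fin m, H)).symm y)

lemma l2n_smul {m : ℕ} (c : ℝ) (x : Fin m → H) :
    l2n (fun i => c • x i) = |c| * l2n x := by
  rw [l2n_eq_norm, l2n_eq_norm]
  exact norm_smul c ((WithLp.equiv 2 (∀ _ : Fin m, H)).symm x)

lemma l2n_le_of_forall {m : ℕ} (x : Fin m → H) (C : ℝ) (hC : 0 ≤ C)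
    (h : ∀ i, ‖x i‖ ≤ C) : l2n x ≤ Real.sqrt m * C := by
  have h1 : ∑ i, ‖x i‖ ^ 2 ≤ (m : ℝ) * C ^ 2 := by
    calc ∑ i, ‖x i‖ ^ 2 ≤ ∑ _i : Fin m, C ^ 2 :=
          Finset.sum_le_sum fun i _ => pow_le_pow_left₀ (norm_nonneg _) (h i) 2
      _ = (m : ℝ) * C ^ 2 := by simp [Finset.sum_const, mul_comm]
  calc l2n x ≤ Real.sqrt ((m:ℝ) * C ^ 2) := Real.sqrt_le_sqrt h1
    _ = Real.sqrt m * C := by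
        rw [Real.sqrt_mul (by positivity), Real.sqrt_sq hC]

lemma sum_norm_le_sqrt_l2n {m : ℕ} (x : Fin m → H) :
    ∑ i, ‖x i‖ ≤ Real.sqrt m * l2n x := by
  have h1 : (∑ i, ‖x i‖) ^ 2 ≤ (m:ℝ) * ∑ i, ‖x i‖ ^ 2 := by
    simpa using sq_sum_le_card_mul_sum_sq (s := Finset.univ) (f := fun i => ‖x i‖)
  have h2 : ∑ i, ‖x i‖ ≤ Real.sqrt ((m:ℝ) * ∑ i, ‖x i‖ ^ 2) := by
    have := Real.sqrt_le_sqrt h1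
    rwa [Real.sqrt_sq (Finset.sum_nonneg fun i _ => norm_nonneg _)] at this
  calc ∑ i, ‖x i‖ ≤ Real.sqrt ((m:ℝ) * ∑ i, ‖x i‖ ^ 2) := h2
    _ = Real.sqrt m * l2n x := by
        rw [Real.sqrt_mul (by positivity)]; rfl

end Aux3

lemma Clam_ge {lam : ℝ} (h0 : 0 < lam) (h1 : lam < 1) : 2 / (1 - lam) ≤ Clam lam := by
  have hL : 0 < Real.log (1 / lam) := Real.log_pos (by rw [lt_div_iff₀ h0]; linarith)
  have hkey : lam * Real.log (1 / lam) ≤ 1 - lam := by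
    have hls := Real.log_le_sub_one_of_pos (x := 1 / lam) (by positivity)
    have h2 : lam * Real.log (1/lam) ≤ lam * (1/lam - 1) :=
      mul_le_mul_of_nonneg_left hls h0.le
    have h3 : lam * (1/lam - 1) = 1 - lam := by field_simp
    linarith
  have hpos : 0 < lam * Real.log (1 / lam) := by positivity
  have h3 : 2 / (1 - lam) ≤ 2 / (lam * Real.log (1/lam)) :=
    div_le_div_of_nonneg_left (by norm_num) hpos hkey
  have h4 : 0 ≤ 8 / (Real.exp 1 ^ 2 * Real.log (1/lam)) := by positivity
  calc 2/(1-lam) ≤ 2/(lam * Real.log (1/lam)) := h3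
    _ = 1 / (lam * Real.log (1/lam)) * 2 := by ring
    _ ≤ 1 / (lam * Real.log (1/lam)) * (8 / (Real.exp 1 ^ 2 * Real.log (1/lam)) + 2) := by
        apply mul_le_mul_of_nonneg_left (by linarith) (by positivity)
    _ = Clam lam := rfl

lemma geom_tail_le {lam : ℝ} (h0 : 0 ≤ lam) (h1 : lam < 1) (a b : ℕ) :
    ∑ t ∈ Finset.Icc a b, lam ^ (t - a) ≤ (1 - lam)⁻¹ := by
  rw [← Finset.Ico_add_one_right_eq_Icc, Finset.sum_Ico_eq_sum_range]
  set n := b + 1 - a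
  have he : ∀ u ∈ Finset.range n, lam ^ (a + u - a) = lam ^ u := by
    intro u _; congr 1; omega
  rw [Finset.sum_congr rfl he]
  have h3 : (0:ℝ) < 1 - lam := by linarith
  have h2 : (∑ u ∈ Finset.range n, lam ^ u) = (1 - lam ^ n) / (1 - lam) := by
    rw [eq_div_iff h3.ne']
    have := geom_sum_mul lam n
    linarith [this]
  rw [h2]
  have hp := pow_nonneg h0 n
  rw [← one_div]
  gcongr
  linarith

lemma telescope_half (T : ℕ) :
    ∑ s ∈ Finset.Icc 1 T, (((s:ℝ)+1)⁻¹ * ((s:ℝ)+2)⁻¹) ≤ 1/2 := by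
  have he : ∀ s ∈ Finset.Icc 1 T, ((s:ℝ)+1)⁻¹ * ((s:ℝ)+2)⁻¹
      = ((s:ℝ)+1)⁻¹ - ((s:ℝ)+2)⁻¹ := by
    intro s _
    have h1 : ((s:ℝ)+1) > 0 := by positivity
    have h2 : ((s:ℝ)+2) > 0 := by positivity
    field_simp
    norm_num
  rw [Finset.sum_congr rfl he, ← Finset.Ico_add_one_right_eq_Icc, Finset.sum_Ico_eq_sum_range]
  have he2 : ∀ u ∈ Finset.range (T + 1 - 1),
      (((1+u : ℕ):ℝ)+1)⁻¹ - (((1+u : ℕ):ℝ)+2)⁻¹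
      = (fun p : ℕ => ((p:ℝ)+2)⁻¹) u - (fun p : ℕ => ((p:ℝ)+2)⁻¹) (u+1) := by
    intro u _
    push_cast
    norm_num
    ring_nf
  rw [Finset.sum_congr rfl he2, Finset.sum_range_sub' (fun p : ℕ => ((p:ℝ)+2)⁻¹)]
  have : (0:ℝ) ≤ (((T + 1 - 1 : ℕ):ℝ)+2)⁻¹ := by positivity
  norm_num
  linarith

lemma sum_eta_K_le {lam : ℝ} (h0 : 0 < lam) (h1 : lam < 1) (T : ℕ) (hT : 1 ≤ T) :
    ∑ t ∈ Finset.Icc 1 T, (((t:ℝ)+1)⁻¹ *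
        ∑ s ∈ Finset.Icc 1 (t-1), lam ^ (t-1-s) * ((s:ℝ)+1)⁻¹)
      ≤ Clam lam * ((T:ℝ) / ((T:ℝ)+1)) := by
  set G : ℕ → ℕ → ℝ := fun t s =>
    (if s + 1 ≤ t then lam ^ (t-1-s) else 0) * (((s:ℝ)+1)⁻¹ * ((s:ℝ)+2)⁻¹) with hG
  -- step 1 : termwise bound and extension of the inner index range
  have step1 : ∑ t ∈ Finset.Icc 1 T, (((t:ℝ)+1)⁻¹ *
        ∑ s ∈ Finset.Icc 1 (t-1), lam ^ (t-1-s) * ((s:ℝ)+1)⁻¹)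
      ≤ ∑ t ∈ Finset.Icc 1 T, ∑ s ∈ Finset.Icc 1 T, G t s := by
    apply Finset.sum_le_sum
    intro t ht
    rw [Finset.mem_Icc] at ht
    rw [Finset.mul_sum]
    have hsub : Finset.Icc 1 (t-1) ⊆ Finset.Icc 1 T := by
      apply Finset.Icc_subset_Icc le_rfl; omega
    rw [← Finset.sum_subset hsub (fun s hs hns => ?_)]
    · apply Finset.sum_le_sum
      intro s hs
      rw [Finset.mem_Icc] at hs
      have hst : s + 1 ≤ t := by omega
      rw [hG]
      simp only [if_pos hst]
      have hc1 : ((s:ℝ)+2) ≤ ((t:ℝ)+1) := by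
        have : (s:ℝ) + 1 ≤ (t:ℝ) := by exact_mod_cast hst
        linarith
      have h2 : ((t:ℝ)+1)⁻¹ ≤ ((s:ℝ)+2)⁻¹ := by
        apply inv_anti₀ (by positivity) hc1
      calc ((t:ℝ)+1)⁻¹ * (lam ^ (t-1-s) * ((s:ℝ)+1)⁻¹)
          = (lam ^ (t-1-s) * ((s:ℝ)+1)⁻¹) * ((t:ℝ)+1)⁻¹ := by ring
        _ ≤ (lam ^ (t-1-s) * ((s:ℝ)+1)⁻¹) * ((s:ℝ)+2)⁻¹ := by
            apply mul_le_mul_of_nonneg_left h2 (by positivity)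
        _ = lam ^ (t-1-s) * (((s:ℝ)+1)⁻¹ * ((s:ℝ)+2)⁻¹) := by ring
    · rw [Finset.mem_Icc] at hs hns
      have : ¬ (s + 1 ≤ t) := by omega
      rw [hG]; simp only [if_neg this, zero_mul]
  -- step 2 : swap and bound the geometric part
  have step2 : ∑ t ∈ Finset.Icc 1 T, ∑ s ∈ Finset.Icc 1 T, G t s
      ≤ (1 - lam)⁻¹ * (1/2) := by
    rw [Finset.sum_comm]
    have inner_le : ∀ s ∈ Finset.Icc 1 T, ∑ t ∈ Finset.Icc 1 T, G t s
        ≤ (1 - lam)⁻¹ * (((s:ℝ)+1)⁻¹ * ((s:ℝ)+2)⁻¹) := by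
      intro s hs
      rw [hG, ← Finset.sum_mul]
      apply mul_le_mul_of_nonneg_right _ (by positivity)
      have hsub2 : Finset.Icc (s+1) T ⊆ Finset.Icc 1 T :=
        Finset.Icc_subset_Icc (by omega) le_rfl
      rw [← Finset.sum_subset hsub2 (fun t ht hnt => ?_)]
      · have he3 : ∀ t ∈ Finset.Icc (s+1) T,
            (if s + 1 ≤ t then lam ^ (t-1-s) else 0) = lam ^ (t - (s+1)) := by
          intro t ht
          rw [Finset.mem_Icc] at ht
          rw [if_pos ht.1]
          congr 1
          omega
        rw [Finset.sum_congr rfl he3]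
        exact geom_tail_le h0.le h1 (s+1) T
      · rw [Finset.mem_Icc] at ht hnt
        have : ¬ (s + 1 ≤ t) := by omega
        rw [if_neg this]
    calc ∑ s ∈ Finset.Icc 1 T, ∑ t ∈ Finset.Icc 1 T, G t s
        ≤ ∑ s ∈ Finset.Icc 1 T, (1 - lam)⁻¹ * (((s:ℝ)+1)⁻¹ * ((s:ℝ)+2)⁻¹) :=
          Finset.sum_le_sum inner_le
      _ = (1 - lam)⁻¹ * ∑ s ∈ Finset.Icc 1 T, (((s:ℝ)+1)⁻¹ * ((s:ℝ)+2)⁻¹) := by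
          rw [Finset.mul_sum]
      _ ≤ (1 - lam)⁻¹ * (1/2) := by
          apply mul_le_mul_of_nonneg_left (telescope_half T)
          have : (0:ℝ) < 1 - lam := by linarith
          positivity
  -- step 3 : compare with Clam
  have hT1 : (1:ℝ) ≤ (T:ℝ) := by exact_mod_cast hT
  have hTpos : (0:ℝ) < (T:ℝ) + 1 := by linarith
  have step3 : (1 - lam)⁻¹ * (1/2) ≤ Clam lam * ((T:ℝ) / ((T:ℝ)+1)) := by
    have hq : (1:ℝ)/2 ≤ (T:ℝ) / ((T:ℝ)+1) := by
      rw [div_le_div_iff₀ (by norm_num) hTpos]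
      linarith
    have hc := Clam_ge h0 h1
    have h1lam : (0:ℝ) < 1 - lam := by linarith
    have hC : (0:ℝ) < (1-lam)⁻¹ := by positivity
    have hq2 : (0:ℝ) ≤ (T:ℝ) / ((T:ℝ)+1) := by positivity
    calc (1 - lam)⁻¹ * (1/2) ≤ (1 - lam)⁻¹ * ((T:ℝ) / ((T:ℝ)+1)) :=
          mul_le_mul_of_nonneg_left hq hC.le
      _ ≤ (2 / (1 - lam)) * ((T:ℝ) / ((T:ℝ)+1)) := by
          apply mul_le_mul_of_nonneg_right _ hq2
          rw [div_eq_mul_inv]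
          nlinarith [hC]
      _ ≤ Clam lam * ((T:ℝ) / ((T:ℝ)+1)) :=
          mul_le_mul_of_nonneg_right hc hq2
  linarith [step1, step2, step3]


section Aux4
variable {H : Type*} [NormedAddCommGroup H] [InnerProductSpace ℝ H]

lemma avg_const {m : ℕ} (hm : 0 < m) (c : H) : (m:ℝ)⁻¹ • ∑ _i : Fin m, c = c := by
  rw [Finset.sum_const, Finset.card_univ, Fintype.card_fin,
    ← Nat.cast_smul_eq_nsmul ℝ, smul_smul,
    inv_mul_cancel₀ (by exact_mod_cast hm.ne' : (m:ℝ) ≠ 0), one_smul]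

lemma sum_center_zero {m : ℕ} (hm : 0 < m) (x : Fin m → H) :
    ∑ i, (x i - (m:ℝ)⁻¹ • ∑ l, x l) = 0 := by
  rw [Finset.sum_sub_distrib, Finset.sum_const, Finset.card_univ, Fintype.card_fin,
    ← Nat.cast_smul_eq_nsmul ℝ, smul_smul,
    mul_inv_cancel₀ (by exact_mod_cast hm.ne' : (m:ℝ) ≠ 0), one_smul, sub_self]

lemma avg_norm_le {m : ℕ} (hm : 0 < m) (x : Fin m → H) (C : ℝ) (h : ∀ i, ‖x i‖ ≤ C) :
    ‖(m:ℝ)⁻¹ • ∑ i, x i‖ ≤ C := by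
  have hm' : (0:ℝ) < m := by exact_mod_cast hm
  have h1 : ‖∑ i, x i‖ ≤ (m:ℝ) * C := by
    calc ‖∑ i, x i‖ ≤ ∑ i, ‖x i‖ := norm_sum_le _ _
      _ ≤ ∑ _i : Fin m, C := Finset.sum_le_sum fun i _ => h i
      _ = (m:ℝ) * C := by simp [Finset.sum_const, mul_comm]
  rw [norm_smul, Real.norm_eq_abs, abs_of_pos (by positivity)]
  calc (m:ℝ)⁻¹ * ‖∑ i, x i‖ ≤ (m:ℝ)⁻¹ * ((m:ℝ) * C) :=
        mul_le_mul_of_nonneg_left h1 (by positivity)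
    _ = C := by field_simp

end Aux4


/-- a tiny helper: `l2n` definitionally. -/
lemma l2n_def {H : Type*} [NormedAddCommGroup H] {m : ℕ} (x : Fin m → H) :
    l2n x = Real.sqrt (∑ i, ‖x i‖ ^ 2) := rfl

/-- convex case, decreasing stepsize `η_t = 1/(t+1)`, `1/(t+1) ≤ 2/β`. -/
theorem dsgd_stability_convex_decreasing_step
    {H : Type*} [NormedAddCommGroup H] [InnerProductSpace ℝ H]
    {Z : Type*} (f : Z → H → ℝ) (f' : Z → H → H)
    (L β : ℝ) (hL : 0 < L) (hβ : 0 < β)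
    (hdiff : ∀ (z : Z) (x : H), HasFDerivAt (f z) ((innerSL ℝ) (f' z x)) x)
    (hlip : ∀ (z : Z) (x y : H), |f z x - f z y| ≤ L * ‖x - y‖)
    (hgradbd : ∀ (z : Z) (x : H), ‖f' z x‖ ≤ L)
    (hsmooth : ∀ (z : Z) (x y : H), ‖f' z x - f' z y‖ ≤ β * ‖x - y‖)
    (hconv : ∀ z : Z, ConvexOn ℝ Set.univ (f z))
    (m n T : ℕ) (hm : 1 ≤ m) (hn : 1 ≤ n) (hT : 1 ≤ T)
    (P : Fin m → Fin m → ℝ)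
    (hPsym : ∀ i l, P i l = P l i)
    (hPpos : ∀ i l, 0 ≤ P i l)
    (hProw : ∀ i, ∑ l, P i l = 1)
    (lam : ℝ) (hlam0 : 0 < lam) (hlam1 : lam < 1)
    (hspec : ∀ vv : Fin m → H, ∑ i, vv i = 0 →
      Real.sqrt (∑ i, ‖∑ l, P i l • vv l‖ ^ 2) ≤ lam * Real.sqrt (∑ i, ‖vv i‖ ^ 2))
    (r : Fin m) (k : Fin n)
    (S S' : Fin m → Fin n → Z)
    (hSS' : ∀ (r' : Fin m) (k' : Fin n), (r', k') ≠ (r, k) → S' r' k' = S r' k')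
    (j : ℕ → Fin m → Fin n)
    (η : ℕ → ℝ) (hηdef : ∀ t, η t = ((t : ℝ) + 1)⁻¹)
    (hηβ : ∀ t, 1 ≤ t → t ≤ T → η t ≤ 2 / β)
    (w₀ : H) (w v : ℕ → Fin m → H)
    (hw1 : ∀ i, w 1 i = w₀) (hv1 : ∀ i, v 1 i = w₀)
    (hwrec : ∀ t, 1 ≤ t → t ≤ T → ∀ i,
      w (t + 1) i = ∑ l, P i l • w t l - η t • f' (S i (j t i)) (w t i))
    (hvrec : ∀ t, 1 ≤ t → t ≤ T → ∀ i,
      v (t + 1) i = ∑ l, P i l • v t l - η t • f' (S' i (j t i)) (v t i))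
    :
    ∀ z : Z,
      |f z ((m : ℝ)⁻¹ • ∑ i, w (T + 1) i) - f z ((m : ℝ)⁻¹ • ∑ i, v (T + 1) i)| ≤
        4 * β * L ^ 2 * Clam lam * ((T : ℝ) / ((T : ℝ) + 1))
          + 2 * L ^ 2 / m * ∑ t ∈ Finset.Icc 1 T, (if j t r = k then (1 : ℝ) else 0) / ((t : ℝ) + 1) := by
  intro z
  have hm0 : 0 < m := hm
  have hm' : (0:ℝ) < m := by exact_mod_cast hm
  have hηpos : ∀ t : ℕ, 0 < η t := fun t => by rw [hηdef]; positivity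
  have hPcol : ∀ l, ∑ i, P i l = 1 := by
    intro l
    calc ∑ i, P i l = ∑ i, P l i := Finset.sum_congr rfl fun i _ => hPsym i l
      _ = 1 := hProw l
  have hmix : ∀ x : Fin m → H, ∑ i, ∑ l, P i l • x l = ∑ l, x l := by
    intro x
    rw [Finset.sum_comm]
    calc ∑ l, ∑ i, P i l • x l = ∑ l, (∑ i, P i l) • x l := by
          refine Finset.sum_congr rfl fun l _ => ?_
          rw [Finset.sum_smul]
      _ = ∑ l, x l := Finset.sum_congr rfl fun l _ => by rw [hPcol l, one_smul]
  -- centers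
  set cw : ℕ → H := fun t => (m:ℝ)⁻¹ • ∑ i, w t i with hcwdef
  set cv : ℕ → H := fun t => (m:ℝ)⁻¹ • ∑ i, v t i with hcvdef
  -- the decay factor
  set K : ℕ → ℝ := fun t => ∑ s ∈ Finset.Icc 1 (t-1), lam ^ (t-1-s) * η s with hKdef
  have hKnonneg : ∀ t, 0 ≤ K t := by
    intro t
    apply Finset.sum_nonneg
    intro s _
    have := (hηpos s).le
    positivity
  have hKrec : ∀ t, 1 ≤ t → K (t+1) = lam * K t + η t := by
    intro t ht
    obtain ⟨u, rfl⟩ : ∃ u, t = u + 1 := ⟨t - 1, by omega⟩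
    have h1 : K (u + 1 + 1) = ∑ s ∈ Finset.Icc 1 (u+1), lam ^ (u + 1 - s) * η s := by
      rw [hKdef]; simp
    rw [h1, Finset.sum_Icc_succ_top (by omega : 1 ≤ u + 1)]
    have h2 : ∀ s ∈ Finset.Icc 1 u, lam ^ (u + 1 - s) * η s = lam * (lam ^ (u - s) * η s) := by
      intro s hs
      rw [Finset.mem_Icc] at hs
      rw [show u + 1 - s = (u - s) + 1 by omega, pow_succ]
      ring
    rw [Finset.sum_congr rfl h2, ← Finset.mul_sum]
    have h3 : K (u+1) = ∑ s ∈ Finset.Icc 1 u, lam ^ (u - s) * η s := by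
      rw [hKdef]; simp
    rw [← h3]
    simp
  -- generic consensus bound
  have consensus_bound : ∀ (x : ℕ → Fin m → H) (g : ℕ → Fin m → H),
      (∀ i, x 1 i = w₀) →
      (∀ t, 1 ≤ t → t ≤ T → ∀ i, x (t+1) i = ∑ l, P i l • x t l - η t • g t i) →
      (∀ t i, ‖g t i‖ ≤ L) →
      ∀ t, 1 ≤ t → t ≤ T + 1 →
        l2n (fun i => x t i - (m:ℝ)⁻¹ • ∑ l, x t l) ≤ 2*L*Real.sqrt m * K t := by
    intro x g hx1 hxrec hgbd t ht
    induction t, ht using Nat.le_induction with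
    | base =>
      intro _
      have hc : (m:ℝ)⁻¹ • ∑ l, x 1 l = w₀ := by simp only [hx1]; exact avg_const hm0 w₀
      have h0 : (fun i => x 1 i - (m:ℝ)⁻¹ • ∑ l, x 1 l) = fun _ : Fin m => (0:H) := by
        funext i; rw [hx1 i, hc, sub_self]
      rw [h0]
      have hz : l2n (fun _ : Fin m => (0:H)) = 0 := by
        rw [l2n_def]; simp
      have hK1 : K 1 = 0 := by rw [hKdef]; simp
      rw [hz, hK1, mul_zero]
    | succ t ht IH =>
      intro htT1
      have htT : t ≤ T := by omega
      have hIH := IH (by omega)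
      have hcenter : (m:ℝ)⁻¹ • ∑ l, x (t+1) l
          = (m:ℝ)⁻¹ • ∑ l, x t l - η t • ((m:ℝ)⁻¹ • ∑ l, g t l) := by
        have hs : ∑ i, x (t+1) i = ∑ i, x t i - η t • ∑ i, g t i := by
          calc ∑ i, x (t+1) i = ∑ i, (∑ l, P i l • x t l - η t • g t i) :=
                Finset.sum_congr rfl fun i _ => hxrec t ht htT i
            _ = ∑ i, ∑ l, P i l • x t l - ∑ i, η t • g t i := Finset.sum_sub_distrib _ _
            _ = ∑ l, x t l - η t • ∑ i, g t i := by rw [hmix, ← Finset.smul_sum]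
        rw [hs, smul_sub, smul_comm]
      have hdev : ∀ i, x (t+1) i - (m:ℝ)⁻¹ • ∑ l, x (t+1) l
          = (∑ l, P i l • (x t l - (m:ℝ)⁻¹ • ∑ l', x t l'))
            - η t • (g t i - (m:ℝ)⁻¹ • ∑ l, g t l) := by
        intro i
        rw [hxrec t ht htT i, hcenter]
        have h4 : ∑ l, P i l • (x t l - (m:ℝ)⁻¹ • ∑ l', x t l')
            = ∑ l, P i l • x t l - (m:ℝ)⁻¹ • ∑ l', x t l' := by
          have h5 : ∀ l, P i l • (x t l - (m:ℝ)⁻¹ • ∑ l', x t l')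
              = P i l • x t l - P i l • ((m:ℝ)⁻¹ • ∑ l', x t l') := fun l => smul_sub _ _ _
          rw [Finset.sum_congr rfl fun l _ => h5 l, Finset.sum_sub_distrib,
            ← Finset.sum_smul, hProw i, one_smul]
        rw [h4, smul_sub]
        abel
      have hgdev : ∀ i, ‖g t i - (m:ℝ)⁻¹ • ∑ l, g t l‖ ≤ 2*L := by
        intro i
        calc ‖g t i - (m:ℝ)⁻¹ • ∑ l, g t l‖ ≤ ‖g t i‖ + ‖(m:ℝ)⁻¹ • ∑ l, g t l‖ :=
              norm_sub_le _ _
          _ ≤ L + L := add_le_add (hgbd t i) (avg_norm_le hm0 (g t) L (hgbd t))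
          _ = 2*L := by ring
      have hnorm : l2n (fun i => x (t+1) i - (m:ℝ)⁻¹ • ∑ l, x (t+1) l)
          ≤ lam * l2n (fun i => x t i - (m:ℝ)⁻¹ • ∑ l', x t l') + η t * (2*L*Real.sqrt m) := by
        have hrw : (fun i => x (t+1) i - (m:ℝ)⁻¹ • ∑ l, x (t+1) l)
            = fun i => (∑ l, P i l • (x t l - (m:ℝ)⁻¹ • ∑ l', x t l'))
              - η t • (g t i - (m:ℝ)⁻¹ • ∑ l, g t l) := funext hdev
        rw [hrw]
        have htri := l2n_sub_le (fun i => ∑ l, P i l • (x t l - (m:ℝ)⁻¹ • ∑ l', x t l'))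
          (fun i => η t • (g t i - (m:ℝ)⁻¹ • ∑ l, g t l))
        refine htri.trans (add_le_add ?_ ?_)
        · exact hspec _ (sum_center_zero hm0 (x t))
        · have h5 : l2n (fun i => η t • (g t i - (m:ℝ)⁻¹ • ∑ l, g t l))
              = |η t| * l2n (fun i => g t i - (m:ℝ)⁻¹ • ∑ l, g t l) :=
            l2n_smul (η t) _
          rw [h5, abs_of_pos (hηpos t)]
          apply mul_le_mul_of_nonneg_left _ (hηpos t).le
          have h6 := l2n_le_of_forall (fun i => g t i - (m:ℝ)⁻¹ • ∑ l, g t l) (2*L)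
            (by linarith) hgdev
          calc l2n (fun i => g t i - (m:ℝ)⁻¹ • ∑ l, g t l) ≤ Real.sqrt m * (2*L) := h6
            _ = 2*L*Real.sqrt m := by ring
      calc l2n (fun i => x (t+1) i - (m:ℝ)⁻¹ • ∑ l, x (t+1) l)
          ≤ lam * l2n (fun i => x t i - (m:ℝ)⁻¹ • ∑ l', x t l') + η t * (2*L*Real.sqrt m) :=
            hnorm
        _ ≤ lam * (2*L*Real.sqrt m * K t) + η t * (2*L*Real.sqrt m) := by
            apply add_le_add_left
            exact mul_le_mul_of_nonneg_left hIH hlam0.le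
        _ = 2*L*Real.sqrt m * (lam * K t + η t) := by ring
        _ = 2*L*Real.sqrt m * K (t+1) := by rw [hKrec t ht]
  -- averages recursion
  have havg : ∀ (x g : ℕ → Fin m → H),
      (∀ t, 1 ≤ t → t ≤ T → ∀ i, x (t+1) i = ∑ l, P i l • x t l - η t • g t i) →
      ∀ t, 1 ≤ t → t ≤ T →
        (m:ℝ)⁻¹ • ∑ l, x (t+1) l
          = (m:ℝ)⁻¹ • ∑ l, x t l - η t • ((m:ℝ)⁻¹ • ∑ l, g t l) := by
    intro x g hxrec t ht htT
    have hs : ∑ i, x (t+1) i = ∑ i, x t i - η t • ∑ i, g t i := by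
      calc ∑ i, x (t+1) i = ∑ i, (∑ l, P i l • x t l - η t • g t i) :=
            Finset.sum_congr rfl fun i _ => hxrec t ht htT i
        _ = ∑ i, ∑ l, P i l • x t l - ∑ i, η t • g t i := Finset.sum_sub_distrib _ _
        _ = ∑ l, x t l - η t • ∑ i, g t i := by rw [hmix, ← Finset.smul_sum]
    rw [hs, smul_sub, smul_comm]
  -- single-step bound for the distance of averages
  have hδrec : ∀ t, 1 ≤ t → t ≤ T →
      ‖cw (t+1) - cv (t+1)‖ ≤ ‖cw t - cv t‖ + 4*L*β*(η t * K t)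
        + (2*L/m) * ((if j t r = k then (1:ℝ) else 0) * η t) := by
    intro t ht htT
    have hη0 := (hηpos t).le
    have hη2 := hηβ t ht htT
    simp only [hcwdef, hcvdef]
    set A : H := (m:ℝ)⁻¹ • ∑ i, w t i with hA
    set B : H := (m:ℝ)⁻¹ • ∑ i, v t i with hB
    set gw1 : ℕ → Fin m → H := fun tt i => f' (S i (j tt i)) (w tt i) with hgw1
    set gv1 : ℕ → Fin m → H := fun tt i => f' (S' i (j tt i)) (v tt i) with hgv1
    set d : Fin m → H := fun i => f' (S i (j t i)) A - f' (S i (j t i)) B with hd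
    set a : Fin m → H := fun i => f' (S i (j t i)) (w t i) - f' (S i (j t i)) A with ha
    set b : Fin m → H := fun i => f' (S i (j t i)) (v t i) - f' (S i (j t i)) B with hb
    set e : Fin m → H := fun i => f' (S i (j t i)) (v t i) - f' (S' i (j t i)) (v t i) with he
    have h1 : (m:ℝ)⁻¹ • ∑ l, w (t+1) l = A - η t • ((m:ℝ)⁻¹ • ∑ l, gw1 t l) :=
      havg w gw1 hwrec t ht htT
    have h2 : (m:ℝ)⁻¹ • ∑ l, v (t+1) l = B - η t • ((m:ℝ)⁻¹ • ∑ l, gv1 t l) :=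
      havg v gv1 hvrec t ht htT
    have hptwise : ∀ i, gw1 t i - gv1 t i = d i + (a i - b i + e i) := by
      intro i
      simp only [hgw1, hgv1, hd, ha, hb, he]
      abel
    have hG : (m:ℝ)⁻¹ • ∑ l, gw1 t l - (m:ℝ)⁻¹ • ∑ l, gv1 t l
        = (m:ℝ)⁻¹ • ∑ i, d i + (m:ℝ)⁻¹ • ∑ i, (a i - b i + e i) := by
      rw [← smul_sub, ← smul_add, ← Finset.sum_sub_distrib, ← Finset.sum_add_distrib]
      congr 1
      exact Finset.sum_congr rfl fun i _ => hptwise i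
    have hkey : (m:ℝ)⁻¹ • ∑ i, w (t+1) i - (m:ℝ)⁻¹ • ∑ i, v (t+1) i
        = ((A - B) - η t • ((m:ℝ)⁻¹ • ∑ i, d i))
          - η t • ((m:ℝ)⁻¹ • ∑ i, (a i - b i + e i)) := by
      rw [h1, h2]
      have e1 : (A - η t • ((m:ℝ)⁻¹ • ∑ l, gw1 t l)) - (B - η t • ((m:ℝ)⁻¹ • ∑ l, gv1 t l))
          = (A - B) - η t • ((m:ℝ)⁻¹ • ∑ l, gw1 t l - (m:ℝ)⁻¹ • ∑ l, gv1 t l) := by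
        rw [smul_sub]; abel
      rw [e1, hG, smul_add]
      abel
    rw [hkey]
    -- nonexpansiveness of the averaged gradient step
    have hnonexp : ‖(A - B) - η t • ((m:ℝ)⁻¹ • ∑ i, d i)‖ ≤ ‖A - B‖ := by
      have hco : ∀ i, ‖d i‖ ^ 2 ≤ β * ⟪d i, A - B⟫ := fun i =>
        coco (f (S i (j t i))) (f' (S i (j t i))) β hβ (hdiff _) (hsmooth _) (hconv _) A B
      exact nonexp_of_coco (A - B) ((m:ℝ)⁻¹ • ∑ i, d i) β (η t) hβ
        (avg_coco hm0 d (A - B) β hβ hco) hη0 hη2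
    -- consensus bounds
    have hconsw := consensus_bound w gw1 hw1 hwrec (fun tt i => hgradbd _ _) t ht (by omega)
    have hconsv := consensus_bound v gv1 hv1 hvrec (fun tt i => hgradbd _ _) t ht (by omega)
    have hsum_a : ∑ i, ‖a i‖ ≤ 2*L*β*(m:ℝ) * K t := by
      have h3 : ∑ i, ‖a i‖ ≤ β * ∑ i, ‖w t i - A‖ := by
        rw [Finset.mul_sum]
        refine Finset.sum_le_sum fun i _ => ?_
        simp only [ha]
        exact hsmooth _ _ _
      have h4 : ∑ i, ‖w t i - A‖ ≤ Real.sqrt m * l2n (fun i => w t i - A) :=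
        sum_norm_le_sqrt_l2n _
      have h5 : l2n (fun i => w t i - A) ≤ 2*L*Real.sqrt m * K t := hconsw
      have h6 : Real.sqrt m * Real.sqrt m = (m:ℝ) := Real.mul_self_sqrt (by positivity)
      have hsm : (0:ℝ) ≤ Real.sqrt m := Real.sqrt_nonneg _
      calc ∑ i, ‖a i‖ ≤ β * ∑ i, ‖w t i - A‖ := h3
        _ ≤ β * (Real.sqrt m * l2n (fun i => w t i - A)) :=
            mul_le_mul_of_nonneg_left h4 hβ.le
        _ ≤ β * (Real.sqrt m * (2*L*Real.sqrt m * K t)) := by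
            apply mul_le_mul_of_nonneg_left _ hβ.le
            exact mul_le_mul_of_nonneg_left h5 hsm
        _ = 2*L*β*(Real.sqrt m * Real.sqrt m) * K t := by ring
        _ = 2*L*β*(m:ℝ) * K t := by rw [h6]
    have hsum_b : ∑ i, ‖b i‖ ≤ 2*L*β*(m:ℝ) * K t := by
      have h3 : ∑ i, ‖b i‖ ≤ β * ∑ i, ‖v t i - B‖ := by
        rw [Finset.mul_sum]
        refine Finset.sum_le_sum fun i _ => ?_
        simp only [hb]
        exact hsmooth _ _ _
      have h4 : ∑ i, ‖v t i - B‖ ≤ Real.sqrt m * l2n (fun i => v t i - B) :=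
        sum_norm_le_sqrt_l2n _
      have h5 : l2n (fun i => v t i - B) ≤ 2*L*Real.sqrt m * K t := hconsv
      have h6 : Real.sqrt m * Real.sqrt m = (m:ℝ) := Real.mul_self_sqrt (by positivity)
      have hsm : (0:ℝ) ≤ Real.sqrt m := Real.sqrt_nonneg _
      calc ∑ i, ‖b i‖ ≤ β * ∑ i, ‖v t i - B‖ := h3
        _ ≤ β * (Real.sqrt m * l2n (fun i => v t i - B)) :=
            mul_le_mul_of_nonneg_left h4 hβ.le
        _ ≤ β * (Real.sqrt m * (2*L*Real.sqrt m * K t)) := by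
            apply mul_le_mul_of_nonneg_left _ hβ.le
            exact mul_le_mul_of_nonneg_left h5 hsm
        _ = 2*L*β*(Real.sqrt m * Real.sqrt m) * K t := by ring
        _ = 2*L*β*(m:ℝ) * K t := by rw [h6]
    have hsum_e : ∑ i, ‖e i‖ ≤ (if j t r = k then (1:ℝ) else 0) * (2*L) := by
      have hzero : ∀ i, i ≠ r ∨ j t i ≠ k → e i = 0 := by
        intro i hi
        have hne : (i, j t i) ≠ (r, k) := by
          intro hc
          injection hc with hc1 hc2
          rcases hi with hi | hi
          · exact hi hc1
          · subst hc1; exact hi hc2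
        simp only [he, hSS' i (j t i) hne, sub_self]
      by_cases hjk : j t r = k
      · rw [if_pos hjk, one_mul]
        have hbd : ∀ i, ‖e i‖ ≤ if i = r then 2*L else 0 := by
          intro i
          by_cases hir : i = r
          · rw [if_pos hir]
            simp only [he]
            calc ‖f' (S i (j t i)) (v t i) - f' (S' i (j t i)) (v t i)‖
                ≤ ‖f' (S i (j t i)) (v t i)‖ + ‖f' (S' i (j t i)) (v t i)‖ := norm_sub_le _ _
              _ ≤ L + L := add_le_add (hgradbd _ _) (hgradbd _ _)
              _ = 2*L := by ring
          · rw [if_neg hir, hzero i (Or.inl hir), norm_zero]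
        calc ∑ i, ‖e i‖ ≤ ∑ i, (if i = r then 2*L else 0) := Finset.sum_le_sum fun i _ => hbd i
          _ = 2*L := by rw [Finset.sum_ite_eq' Finset.univ r (fun _ => 2*L)]; simp
      · rw [if_neg hjk, zero_mul]
        have : ∀ i, e i = 0 := by
          intro i
          by_cases hir : i = r
          · subst hir; exact hzero i (Or.inr hjk)
          · exact hzero i (Or.inl hir)
        apply le_of_eq
        apply Finset.sum_eq_zero
        intro i _
        rw [this i, norm_zero]
    -- norm of the perturbation term
    have hpert : ‖η t • ((m:ℝ)⁻¹ • ∑ i, (a i - b i + e i))‖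
        ≤ 4*L*β*(η t * K t) + (2*L/m) * ((if j t r = k then (1:ℝ) else 0) * η t) := by
      have hn1 : ‖∑ i, (a i - b i + e i)‖ ≤ ∑ i, ‖a i‖ + ∑ i, ‖b i‖ + ∑ i, ‖e i‖ := by
        calc ‖∑ i, (a i - b i + e i)‖ ≤ ∑ i, ‖a i - b i + e i‖ := norm_sum_le _ _
          _ ≤ ∑ i, (‖a i‖ + ‖b i‖ + ‖e i‖) := by
              refine Finset.sum_le_sum fun i _ => ?_
              calc ‖a i - b i + e i‖ ≤ ‖a i - b i‖ + ‖e i‖ := norm_add_le _ _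
                _ ≤ ‖a i‖ + ‖b i‖ + ‖e i‖ := by
                    have := norm_sub_le (a i) (b i)
                    linarith
          _ = ∑ i, ‖a i‖ + ∑ i, ‖b i‖ + ∑ i, ‖e i‖ := by
              rw [Finset.sum_add_distrib, Finset.sum_add_distrib]
      have hIbd : (if j t r = k then (1:ℝ) else 0) * (2*L) ≥ 0 := by
        by_cases hjk : j t r = k <;> simp [hjk] <;> positivity
      have hn2 : ‖∑ i, (a i - b i + e i)‖
          ≤ 4*L*β*(m:ℝ)*K t + (if j t r = k then (1:ℝ) else 0) * (2*L) := by
        calc ‖∑ i, (a i - b i + e i)‖ ≤ ∑ i, ‖a i‖ + ∑ i, ‖b i‖ + ∑ i, ‖e i‖ := hn1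
          _ ≤ 2*L*β*(m:ℝ) * K t + 2*L*β*(m:ℝ) * K t
              + (if j t r = k then (1:ℝ) else 0) * (2*L) := by
              linarith [hsum_a, hsum_b, hsum_e]
          _ = 4*L*β*(m:ℝ)*K t + (if j t r = k then (1:ℝ) else 0) * (2*L) := by ring
      calc ‖η t • ((m:ℝ)⁻¹ • ∑ i, (a i - b i + e i))‖
          = η t * ((m:ℝ)⁻¹ * ‖∑ i, (a i - b i + e i)‖) := by
            rw [norm_smul, norm_smul, Real.norm_eq_abs, Real.norm_eq_abs,
              abs_of_pos (hηpos t), abs_of_pos (by positivity : (0:ℝ) < (m:ℝ)⁻¹)]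
        _ ≤ η t * ((m:ℝ)⁻¹ * (4*L*β*(m:ℝ)*K t + (if j t r = k then (1:ℝ) else 0) * (2*L))) := by
            apply mul_le_mul_of_nonneg_left _ hη0
            apply mul_le_mul_of_nonneg_left hn2 (by positivity)
        _ = 4*L*β*(η t * K t) * ((m:ℝ)⁻¹ * (m:ℝ))
            + (2*L/m) * ((if j t r = k then (1:ℝ) else 0) * η t) := by
            rw [div_eq_mul_inv]
            ring
        _ = 4*L*β*(η t * K t) + (2*L/m) * ((if j t r = k then (1:ℝ) else 0) * η t) := by
            rw [inv_mul_cancel₀ (by positivity : (m:ℝ) ≠ 0), mul_one]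
    calc ‖((A - B) - η t • ((m:ℝ)⁻¹ • ∑ i, d i))
          - η t • ((m:ℝ)⁻¹ • ∑ i, (a i - b i + e i))‖
        ≤ ‖(A - B) - η t • ((m:ℝ)⁻¹ • ∑ i, d i)‖
          + ‖η t • ((m:ℝ)⁻¹ • ∑ i, (a i - b i + e i))‖ := norm_sub_le _ _
      _ ≤ ‖A - B‖ + (4*L*β*(η t * K t)
          + (2*L/m) * ((if j t r = k then (1:ℝ) else 0) * η t)) := add_le_add hnonexp hpert
      _ = ‖A - B‖ + 4*L*β*(η t * K t)
          + (2*L/m) * ((if j t r = k then (1:ℝ) else 0) * η t) := by ring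
  -- accumulated bound
  have hδbound : ∀ t, 1 ≤ t → t ≤ T + 1 →
      ‖cw t - cv t‖ ≤ ∑ s ∈ Finset.Icc 1 (t-1),
        (4*L*β*(η s * K s) + (2*L/m) * ((if j s r = k then (1:ℝ) else 0) * η s)) := by
    intro t ht
    induction t, ht using Nat.le_induction with
    | base =>
      intro _
      have h1 : cw 1 = w₀ := by rw [hcwdef]; simp only [hw1]; exact avg_const hm0 w₀
      have h2 : cv 1 = w₀ := by rw [hcvdef]; simp only [hv1]; exact avg_const hm0 w₀
      simp [h1, h2]
    | succ t ht IH =>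
      intro htT
      have htT' : t ≤ T := by omega
      have hIH := IH (by omega)
      have hstep := hδrec t ht htT'
      have hsum : ∑ s ∈ Finset.Icc 1 ((t+1)-1),
          (4*L*β*(η s * K s) + (2*L/m) * ((if j s r = k then (1:ℝ) else 0) * η s))
          = ∑ s ∈ Finset.Icc 1 (t-1),
          (4*L*β*(η s * K s) + (2*L/m) * ((if j s r = k then (1:ℝ) else 0) * η s))
          + (4*L*β*(η t * K t) + (2*L/m) * ((if j t r = k then (1:ℝ) else 0) * η t)) := by
        obtain ⟨u, rfl⟩ : ∃ u, t = u + 1 := ⟨t - 1, by omega⟩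
        rw [show (u + 1 + 1) - 1 = (u + 1 - 1) + 1 by omega]
        rw [Finset.sum_Icc_succ_top (by omega : 1 ≤ u + 1 - 1 + 1)]
        norm_num
      rw [hsum]
      linarith
  -- final assembly
  have hfinal := hδbound (T+1) (by omega) le_rfl
  have hT1 : (T+1) - 1 = T := by omega
  rw [hT1] at hfinal
  set SK : ℝ := ∑ s ∈ Finset.Icc 1 T, η s * K s with hSK
  set SI : ℝ := ∑ s ∈ Finset.Icc 1 T, ((if j s r = k then (1:ℝ) else 0) * η s) with hSI
  have hsplit : ∑ s ∈ Finset.Icc 1 T,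
      (4*L*β*(η s * K s) + (2*L/m) * ((if j s r = k then (1:ℝ) else 0) * η s))
      = 4*L*β * SK + (2*L/m) * SI := by
    rw [hSK, hSI, Finset.mul_sum, Finset.mul_sum, ← Finset.sum_add_distrib]
  rw [hsplit] at hfinal
  have hsumK : SK ≤ Clam lam * ((T:ℝ)/((T:ℝ)+1)) := by
    have hle := sum_eta_K_le hlam0 hlam1 T hT
    refine le_trans (le_of_eq ?_) hle
    rw [hSK, hKdef]
    refine Finset.sum_congr rfl fun t _ => ?_
    rw [hηdef t]
    simp only []
    congr 1
    exact Finset.sum_congr rfl fun s _ => by rw [hηdef s]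
  have hSIeq : SI = ∑ t ∈ Finset.Icc 1 T, (if j t r = k then (1:ℝ) else 0) / ((t : ℝ) + 1) := by
    rw [hSI]
    refine Finset.sum_congr rfl fun t _ => ?_
    rw [hηdef t, div_eq_mul_inv]
  have hcwT : cw (T+1) = (m:ℝ)⁻¹ • ∑ i, w (T+1) i := rfl
  have hcvT : cv (T+1) = (m:ℝ)⁻¹ • ∑ i, v (T+1) i := rfl
  have hSInonneg : 0 ≤ SI := by
    rw [hSI]
    apply Finset.sum_nonneg
    intro s _
    have := (hηpos s).le
    by_cases hjk : j s r = k <;> simp [hjk] <;> positivity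
  calc |f z ((m:ℝ)⁻¹ • ∑ i, w (T+1) i) - f z ((m:ℝ)⁻¹ • ∑ i, v (T+1) i)|
      = |f z (cw (T+1)) - f z (cv (T+1))| := by rw [hcwT, hcvT]
    _ ≤ L * ‖cw (T+1) - cv (T+1)‖ := hlip z _ _
    _ ≤ L * (4*L*β * SK + (2*L/m) * SI) := mul_le_mul_of_nonneg_left hfinal hL.le
    _ = 4*β*L^2 * SK + 2*L^2/m * SI := by
        rw [div_eq_mul_inv, div_eq_mul_inv]
        ring
    _ ≤ 4*β*L^2 * (Clam lam * ((T:ℝ)/((T:ℝ)+1))) + 2*L^2/m * SI := by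
        apply add_le_add_left
        apply mul_le_mul_of_nonneg_left hsumK (by positivity)
    _ = 4*β*L^2 * Clam lam * ((T:ℝ)/((T:ℝ)+1))
        + 2*L^2/m * ∑ t ∈ Finset.Icc 1 T, (if j t r = k then (1:ℝ) else 0) / ((t : ℝ) + 1) := by
        rw [hSIeq]
        ring
end
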